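/- arXiv:1407.8433 — 3 statements merged into one kernel-verified Lean document; each statement's English description precedes it below -/
import Mathlib

section
/- In the model where N messages are each sent to an independently and uniformly chosen bin among n bins (n ≥ 1), for every natural number m ≤ N the expected number of bins receiving exactly m messages equals n · binom(N,m) · (1/n)^m · (1 − 1/n)^{N−m}. -/
open Finset

lemma fiber_card (n N : ℕ) (b : Fin n) (s : Finset (Fin N)) :
    (Finset.univ.filter (fun ω : Fin N → Fin n =>
      Finset.univ.filter (fun i : Fin N => ω i = b) = s)).card = (n - 1) ^ (N - s.card) := by
  have key : Finset.univ.filter (fun ω : Fin N → Fin n =>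
      Finset.univ.filter (fun i : Fin N => ω i = b) = s)
      = Fintype.piFinset (fun i => if i ∈ s then {b} else Finset.univ.erase b) := by
    ext ω
    simp only [Finset.mem_filter, Finset.mem_univ, true_and, Fintype.mem_piFinset,
      Finset.ext_iff]
    constructor
    · intro h i
      have := h i
      by_cases hi : i ∈ s <;> simp [hi, this, Finset.mem_erase] at * <;> tauto
    · intro h i
      have := h i
      by_cases hi : i ∈ s <;> simp [hi, Finset.mem_erase] at this ⊢ <;> tauto
  rw [key, Fintype.card_piFinset]
  rw [← Finset.prod_mul_prod_compl s]
  have h1 : ∀ i ∈ s, (if i ∈ s then ({b} : Finset (Fin n)) else Finset.univ.erase b).card = 1 := by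
    intro i hi; simp [hi]
  have h2 : ∀ i ∈ sᶜ, (if i ∈ s then ({b} : Finset (Fin n)) else Finset.univ.erase b).card
      = n - 1 := by
    intro i hi
    simp only [Finset.mem_compl] at hi
    simp [hi, Finset.card_erase_of_mem]
  rw [Finset.prod_congr rfl h1, Finset.prod_congr rfl h2]
  simp [Finset.card_compl]

lemma bin_count (n N m : ℕ) (b : Fin n) :
    (Finset.univ.filter (fun ω : Fin N → Fin n =>
      (Finset.univ.filter (fun i : Fin N => ω i = b)).card = m)).card
      = N.choose m * (n - 1) ^ (N - m) := by
  rw [Finset.card_eq_sum_card_fiberwise (f := fun ω : Fin N → Fin n =>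
      Finset.univ.filter (fun i : Fin N => ω i = b)) (t := Finset.univ.powersetCard m)
      (by intro ω hω; simp only [Finset.coe_filter, Set.mem_setOf_eq] at hω
          simp [Finset.mem_powersetCard, hω.2])]
  have : ∀ s ∈ Finset.univ.powersetCard m,
      ((Finset.univ.filter (fun ω : Fin N → Fin n =>
        (Finset.univ.filter (fun i : Fin N => ω i = b)).card = m)).filter
        (fun ω => Finset.univ.filter (fun i : Fin N => ω i = b) = s)).card
      = (n - 1) ^ (N - m) := by
    intro s hs
    rw [Finset.mem_powersetCard] at hs
    rw [Finset.filter_filter]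
    have heq : (Finset.univ.filter (fun ω : Fin N → Fin n =>
        (Finset.univ.filter (fun i : Fin N => ω i = b)).card = m ∧
        Finset.univ.filter (fun i : Fin N => ω i = b) = s))
        = Finset.univ.filter (fun ω : Fin N → Fin n =>
          Finset.univ.filter (fun i : Fin N => ω i = b) = s) := by
      apply Finset.filter_congr
      intro ω _
      constructor
      · exact fun h => h.2
      · intro h; exact ⟨by rw [h, hs.2], h⟩
    rw [heq, fiber_card, hs.2]
  rw [Finset.sum_congr rfl this, Finset.sum_const, Finset.card_powersetCard, Finset.card_univ,
    Fintype.card_fin, smul_eq_mul]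

/-- With `N` messages each sent to an independently and uniformly chosen bin
among `n ≥ 1` bins (uniform measure on `Fin N → Fin n`), for every `m ≤ N` the expected
number of bins receiving exactly `m` messages equals
`n · binom(N,m) · (1/n)^m · (1 − 1/n)^{N−m}`. -/
theorem stmt3 (n N m : ℕ) (hn : 1 ≤ n) (hm : m ≤ N) :
    (∑ ω : Fin N → Fin n,
        ((Finset.univ.filter (fun b : Fin n =>
          (Finset.univ.filter (fun i : Fin N => ω i = b)).card = m)).card : ℝ)) /
      (Fintype.card (Fin N → Fin n) : ℝ)
    = (n : ℝ) * (N.choose m : ℝ) * (1 / (n : ℝ)) ^ m * (1 - 1 / (n : ℝ)) ^ (N - m) := by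
  have hsum : (∑ ω : Fin N → Fin n,
      (Finset.univ.filter (fun b : Fin n =>
        (Finset.univ.filter (fun i : Fin N => ω i = b)).card = m)).card)
      = n * (N.choose m * (n - 1) ^ (N - m)) := by
    have hcf : ∀ ω : Fin N → Fin n, (Finset.univ.filter (fun b : Fin n =>
        (Finset.univ.filter (fun i : Fin N => ω i = b)).card = m)).card
        = ∑ b : Fin n, if (Finset.univ.filter (fun i : Fin N => ω i = b)).card = m
          then 1 else 0 := fun ω => Finset.card_filter _ _
    rw [Finset.sum_congr rfl (fun ω _ => hcf ω), Finset.sum_comm]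
    have : ∀ b : Fin n, (∑ ω : Fin N → Fin n,
        if (Finset.univ.filter (fun i : Fin N => ω i = b)).card = m then 1 else 0)
        = N.choose m * (n - 1) ^ (N - m) := by
      intro b
      rw [← Finset.card_filter, bin_count]
    rw [Finset.sum_congr rfl (fun b _ => this b), Finset.sum_const, Finset.card_univ,
      Fintype.card_fin, smul_eq_mul]
  rw [show (∑ ω : Fin N → Fin n,
        ((Finset.univ.filter (fun b : Fin n =>
          (Finset.univ.filter (fun i : Fin N => ω i = b)).card = m)).card : ℝ))
      = ((∑ ω : Fin N → Fin n,
        (Finset.univ.filter (fun b : Fin n =>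
          (Finset.univ.filter (fun i : Fin N => ω i = b)).card = m)).card : ℕ) : ℝ) by
      push_cast; rfl]
  rw [hsum]
  have hn0 : (n : ℝ) ≠ 0 := by positivity
  have hcast : ((n - 1 : ℕ) : ℝ) = (n : ℝ) - 1 := by
    rw [Nat.cast_sub hn]; norm_num
  have hpow : (n : ℝ) ^ N = (n : ℝ) ^ m * (n : ℝ) ^ (N - m) := by
    rw [← pow_add, Nat.add_sub_cancel' hm]
  rw [Fintype.card_fun, Fintype.card_fin, Fintype.card_fin]
  push_cast [hcast]
  rw [hpow]
  have h1 : (1 : ℝ) - 1 / n = ((n : ℝ) - 1) / n := by field_simp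
  rw [h1]
  field_simp
  rw [div_pow, one_pow, div_pow]
  field_simp
end

section
/- For every integer L ≥ 1, define for real M > 0: p_s(M, L) = e^{−M} · Σ_{m=0}^{L−2} M^m/m! + (L/(M·e^{M})) · Σ_{m=L}^{∞} M^m/m! (the first sum being empty for L = 1). Then lim_{M→∞} (1 − p_s(M, L))^{M} = e^{−L}. -/
open Filter Finset

private lemma exp_tsum (M : ℝ) : ∑' m : ℕ, M ^ m / (m.factorial : ℝ) = Real.exp M := by
  rw [Real.exp_eq_exp_ℝ, NormedSpace.exp_eq_tsum_div]

private lemma tail_eq (L : ℕ) (M : ℝ) :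
    ∑' m : ℕ, (if L ≤ m then M ^ m / (m.factorial : ℝ) else 0)
      = Real.exp M - ∑ m ∈ Finset.range L, M ^ m / (m.factorial : ℝ) := by
  have hsum : Summable (fun m : ℕ => M ^ m / (m.factorial : ℝ)) :=
    Real.summable_pow_div_factorial M
  have hg2 : Summable (fun m : ℕ => if m ∈ Finset.range L then M ^ m / (m.factorial : ℝ) else 0) :=
    summable_of_ne_finset_zero (s := Finset.range L) (fun b hb => if_neg hb)
  have hpt : (fun m : ℕ => if L ≤ m then M ^ m / (m.factorial : ℝ) else 0)
      = fun m => M ^ m / (m.factorial : ℝ)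
        - (if m ∈ Finset.range L then M ^ m / (m.factorial : ℝ) else 0) := by
    funext m
    by_cases h : L ≤ m
    · simp [h, Finset.mem_range, not_lt.mpr h]
    · simp [h, Finset.mem_range, lt_of_not_ge h]
  rw [hpt, Summable.tsum_sub hsum hg2, exp_tsum, tsum_eq_sum (s := Finset.range L) (fun b hb => if_neg hb)]
  simp only [sub_right_inj]
  exact Finset.sum_congr rfl fun x hx => if_pos hx

private lemma aux_tendsto (k j : ℕ) :
    Tendsto (fun M : ℝ => M ^ j * Real.exp (-M) * ∑ m ∈ Finset.range k, M ^ m / (m.factorial : ℝ))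
      atTop (nhds 0) := by
  have hrw : (fun M : ℝ => M ^ j * Real.exp (-M) * ∑ m ∈ Finset.range k, M ^ m / (m.factorial : ℝ))
      = fun M => ∑ m ∈ Finset.range k, (M ^ (j + m) * Real.exp (-M)) / (m.factorial : ℝ) := by
    funext M
    rw [Finset.mul_sum]
    refine Finset.sum_congr rfl fun m _ => ?_
    rw [pow_add]; ring
  rw [hrw]
  have h0 : (0 : ℝ) = ∑ m ∈ Finset.range k, (0 : ℝ) := by simp
  rw [h0]
  exact tendsto_finset_sum _ fun m _ => by
    simpa using (Real.tendsto_pow_mul_exp_neg_atTop_nhds_zero (j + m)).div_const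
      (m.factorial : ℝ)

/-- For every integer `L ≥ 1`, with
`p_s(M,L) = e^{−M}·Σ_{m=0}^{L−2} M^m/m! + (L/(M·e^M))·Σ_{m=L}^{∞} M^m/m!`
(first sum empty for `L = 1`), one has `lim_{M→∞} (1 − p_s(M,L))^M = e^{−L}`. -/
theorem stmt9 (L : ℕ) (hL : 1 ≤ L) :
    Tendsto (fun M : ℝ =>
        (1 - (Real.exp (-M) * ∑ m ∈ Finset.range (L - 1), M ^ m / (m.factorial : ℝ)
            + ((L : ℝ) / (M * Real.exp M)) *
                ∑' m : ℕ, if L ≤ m then M ^ m / (m.factorial : ℝ) else 0)) ^ M)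
      atTop (nhds (Real.exp (-(L : ℝ)))) := by
  set f : ℝ → ℝ := fun M =>
    Real.exp (-M) * ∑ m ∈ Finset.range (L - 1), M ^ m / (m.factorial : ℝ)
      + ((L : ℝ) / (M * Real.exp M)) *
          ∑' m : ℕ, if L ≤ m then M ^ m / (m.factorial : ℝ) else 0 with hf
  -- M * f M → L
  have hLpos : (0 : ℝ) < L := by exact_mod_cast hL
  have hMf : Tendsto (fun M : ℝ => M * f M) atTop (nhds L) := by
    have hg : Tendsto (fun M : ℝ =>
        M ^ 1 * Real.exp (-M) * ∑ m ∈ Finset.range (L - 1), M ^ m / (m.factorial : ℝ)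
          + ((L : ℝ) - (L : ℝ) *
              (M ^ 0 * Real.exp (-M) * ∑ m ∈ Finset.range L, M ^ m / (m.factorial : ℝ))))
        atTop (nhds (0 + ((L : ℝ) - (L : ℝ) * 0))) := by
      exact (aux_tendsto (L - 1) 1).add
        (tendsto_const_nhds.sub (tendsto_const_nhds.mul (aux_tendsto L 0)))
    simp only [zero_add, mul_zero, sub_zero] at hg
    refine hg.congr' ?_
    filter_upwards [eventually_gt_atTop (0 : ℝ)] with M hM
    have hE : Real.exp M ≠ 0 := (Real.exp_pos M).ne'
    rw [hf]
    simp only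
    rw [tail_eq, Real.exp_neg]
    field_simp
  -- f → 0
  have hf0 : Tendsto f atTop (nhds 0) := by
    have := hMf.mul tendsto_inv_atTop_zero
    rw [mul_zero] at this
    refine this.congr' ?_
    filter_upwards [eventually_gt_atTop (0 : ℝ)] with M hM
    field_simp
  -- f eventually positive
  have hfpos : ∀ᶠ M : ℝ in atTop, 0 < f M := by
    filter_upwards [eventually_gt_atTop (0 : ℝ)] with M hM
    have hsumT : Summable (fun m : ℕ => if L ≤ m then M ^ m / (m.factorial : ℝ) else 0) := by
      refine Summable.of_nonneg_of_le (fun m => ?_) (fun m => ?_)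
        (Real.summable_pow_div_factorial M)
      · split <;> positivity
      · split
        · exact le_refl _
        · positivity
    have hT : (0 : ℝ) < ∑' m : ℕ, if L ≤ m then M ^ m / (m.factorial : ℝ) else 0 := by
      have hterm : (if L ≤ L then M ^ L / (L.factorial : ℝ) else 0)
          ≤ ∑' m : ℕ, if L ≤ m then M ^ m / (m.factorial : ℝ) else 0 :=
        Summable.le_tsum hsumT L (fun j _ => by split <;> positivity)
      rw [if_pos (le_refl L)] at hterm
      have : (0 : ℝ) < M ^ L / (L.factorial : ℝ) := by positivity
      exact lt_of_lt_of_le this hterm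
    have hA : (0 : ℝ) ≤ Real.exp (-M) * ∑ m ∈ Finset.range (L - 1), M ^ m / (m.factorial : ℝ) := by
      apply mul_nonneg (Real.exp_pos _).le
      exact Finset.sum_nonneg fun m _ => by positivity
    have hB : (0 : ℝ) < ((L : ℝ) / (M * Real.exp M)) *
        ∑' m : ℕ, if L ≤ m then M ^ m / (m.factorial : ℝ) else 0 :=
      mul_pos (div_pos hLpos (mul_pos hM (Real.exp_pos M))) hT
    rw [hf]
    exact add_pos_of_nonneg_of_pos hA hB
  -- f tends to 0 within {0}ᶜ
  have hne : Tendsto f atTop (nhdsWithin 0 {(0 : ℝ)}ᶜ) := by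
    rw [tendsto_nhdsWithin_iff]
    exact ⟨hf0, hfpos.mono fun M hM => ne_of_gt hM⟩
  -- slope limit
  have hslope : Tendsto (fun t : ℝ => Real.log (1 - t) / t) (nhdsWithin 0 {(0 : ℝ)}ᶜ)
      (nhds (-1)) := by
    have h1 : HasDerivAt (fun t : ℝ => 1 - t) (-1) 0 := by
      simpa using (hasDerivAt_id (0 : ℝ)).const_sub 1
    have h2 : HasDerivAt (fun t : ℝ => Real.log (1 - t)) (-1) 0 := by
      have hlog := Real.hasDerivAt_log (x := (1 : ℝ) - 0) (by norm_num)
      have := hlog.comp 0 h1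
      rw [show ((1:ℝ) - 0)⁻¹ * -1 = -1 by norm_num] at this
      exact this
    have := hasDerivAt_iff_tendsto_slope.mp h2
    refine this.congr fun t => ?_
    simp [slope_def_field, div_eq_mul_inv]
  -- M * log (1 - f M) → -L
  have hlog : Tendsto (fun M : ℝ => M * Real.log (1 - f M)) atTop (nhds (-(L : ℝ))) := by
    have := hMf.mul (hslope.comp hne)
    have heq : (L : ℝ) * (-1) = -(L : ℝ) := by ring
    rw [heq] at this
    refine this.congr' ?_
    filter_upwards [hfpos] with M hM
    have hne0 : f M ≠ 0 := ne_of_gt hM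
    simp only [Function.comp]
    field_simp
  -- conclude
  have hfinal : Tendsto (fun M : ℝ => Real.exp (M * Real.log (1 - f M))) atTop
      (nhds (Real.exp (-(L : ℝ)))) := (Real.continuous_exp.tendsto _).comp hlog
  refine hfinal.congr' ?_
  have hlt1 : ∀ᶠ M : ℝ in atTop, f M < 1 := hf0.eventually_lt_const one_pos
  filter_upwards [hlt1] with M hM
  show Real.exp (M * Real.log (1 - f M)) = (1 - f M) ^ M
  rw [Real.rpow_def_of_pos (by linarith), mul_comm]
end

section
/- Fix an integer L ≥ 1 and define p_i(L) for integers i ≥ 1 as follows: p_s(1, K) = e^{−1} · Σ_{j=0}^{K−2} 1/j! + (K/e) · Σ_{j=K}^{∞} 1/j! for K ≥ 1 (first sum empty for K = 1), and p_i(L) = Σ_{m=0}^{L−1} ((i−1)^m / (e^{i−1}·m!)) · p_s(1, L−m), with the convention 0⁰ = 1. Then p_i(L) < 1 for every i, p_i(L) → 0 as i → ∞, Σ_{i=1}^{∞} p_i(L) < ∞, and the infinite product ∏_{i=1}^{∞} (1 − p_i(L)) converges to a strictly positive real number. -/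
open Finset Filter

/-- `p_s(1, K) = e^{−1}·Σ_{j=0}^{K−2} 1/j! + (K/e)·Σ_{j=K}^{∞} 1/j!`
(the first sum being empty for `K = 1`). -/
noncomputable def pS1 (K : ℕ) : ℝ :=
  Real.exp (-1) * ∑ j ∈ Finset.range (K - 1), 1 / (j.factorial : ℝ)
    + ((K : ℝ) / Real.exp 1) * ∑' j : ℕ, if K ≤ j then (1 : ℝ) / (j.factorial : ℝ) else 0

/-- `p_i(L) = Σ_{m=0}^{L−1} ((i−1)^m / (e^{i−1}·m!)) · p_s(1, L−m)`, with `0⁰ = 1`. -/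
noncomputable def pRanked (L i : ℕ) : ℝ :=
  ∑ m ∈ Finset.range L,
    ((i : ℝ) - 1) ^ m / (Real.exp ((i : ℝ) - 1) * (m.factorial : ℝ)) * pS1 (L - m)

/- ## Auxiliary lemmas -/

lemma aux_sumF : Summable (fun j : ℕ => (1:ℝ) / j.factorial) := by
  simpa using Real.summable_pow_div_factorial 1

lemma aux_expE : ∑' j : ℕ, (1:ℝ) / j.factorial = Real.exp 1 := by
  rw [Real.exp_eq_exp_ℝ, NormedSpace.exp_eq_tsum_div]
  simp

lemma aux_tail_hasSum (K : ℕ) :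
    HasSum (fun j : ℕ => if K ≤ j then (1:ℝ) / j.factorial else 0)
      (Real.exp 1 - ∑ j ∈ Finset.range K, (1:ℝ) / j.factorial) := by
  have h1 : HasSum (fun t : ℕ => (1:ℝ) / (t + K).factorial)
      (Real.exp 1 - ∑ j ∈ Finset.range K, (1:ℝ) / j.factorial) := by
    refine (hasSum_nat_add_iff (f := fun j : ℕ => (1:ℝ)/j.factorial) K).2 ?_
    have := aux_sumF.hasSum
    rw [aux_expE] at this
    simpa using this
  have hinj : Function.Injective (fun t : ℕ => t + K) := fun a b h => by
    simpa using h
  rw [← hinj.hasSum_iff (f := fun j : ℕ => if K ≤ j then (1:ℝ)/j.factorial else 0)]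
  · refine h1.congr_fun ?_
    intro t
    simp [Nat.le_add_left]
  · intro x hx
    have : ¬ K ≤ x := by
      intro h
      exact hx ⟨x - K, by simpa using Nat.sub_add_cancel h⟩
    simp [this]

lemma aux_fact_ge (K t : ℕ) : (K.factorial : ℝ) * (K+1)^t ≤ ((t + K).factorial : ℝ) := by
  induction t with
  | zero => simp
  | succ t ih =>
    have h1 : ((t + 1 + K).factorial : ℝ) = (t + K + 1) * ((t + K).factorial : ℝ) := by
      have : t + 1 + K = (t + K) + 1 := by omega
      rw [this, Nat.factorial_succ]
      push_cast
      ring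
    rw [h1, pow_succ]
    have h2 : ((K:ℝ)+1) ≤ ((t:ℝ) + K + 1) := by
      have : (0:ℝ) ≤ t := Nat.cast_nonneg t
      linarith
    have h3 : (0:ℝ) ≤ (K.factorial : ℝ) * (K+1)^t :=
      mul_nonneg (Nat.cast_nonneg _) (pow_nonneg (by positivity) _)
    calc (K.factorial : ℝ) * ((K+1)^t * (K+1))
        = ((K:ℝ)+1) * ((K.factorial : ℝ) * (K+1)^t) := by ring
      _ ≤ ((t:ℝ) + K + 1) * ((t + K).factorial : ℝ) := by
          apply mul_le_mul h2 ih h3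
          positivity

lemma aux_tail_le (K : ℕ) (hK : 1 ≤ K) :
    Real.exp 1 - ∑ j ∈ Finset.range K, (1:ℝ) / j.factorial
      ≤ ((K:ℝ)+1) / ((K:ℝ) * K.factorial) := by
  have hK0 : (0:ℝ) < K := by exact_mod_cast hK
  have hKf : (0:ℝ) < (K.factorial : ℝ) := by exact_mod_cast K.factorial_pos
  have hr0 : (0:ℝ) ≤ 1/((K:ℝ)+1) := by positivity
  have hr1 : (1:ℝ)/((K:ℝ)+1) < 1 := by
    rw [div_lt_one (by linarith)]; linarith
  have hgeom : HasSum (fun t : ℕ => (1/(K.factorial:ℝ)) * (1/((K:ℝ)+1))^t)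
      ((1/(K.factorial:ℝ)) * (1 - 1/((K:ℝ)+1))⁻¹) :=
    (hasSum_geometric_of_lt_one hr0 hr1).mul_left _
  have h1 : HasSum (fun t : ℕ => (1:ℝ) / (t + K).factorial)
      (Real.exp 1 - ∑ j ∈ Finset.range K, (1:ℝ) / j.factorial) := by
    refine (hasSum_nat_add_iff (f := fun j : ℕ => (1:ℝ)/j.factorial) K).2 ?_
    have := aux_sumF.hasSum
    rw [aux_expE] at this
    simpa using this
  have hle : (Real.exp 1 - ∑ j ∈ Finset.range K, (1:ℝ) / j.factorial)
      ≤ (1/(K.factorial:ℝ)) * (1 - 1/((K:ℝ)+1))⁻¹ := by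
    refine hasSum_le (fun t => ?_) h1 hgeom
    have hfg := aux_fact_ge K t
    have hfp : (0:ℝ) < ((t + K).factorial : ℝ) := by exact_mod_cast (t+K).factorial_pos
    rw [div_le_iff₀ hfp]
    have : (1/(K.factorial:ℝ)) * (1/((K:ℝ)+1))^t * ((K.factorial:ℝ) * ((K:ℝ)+1)^t) = 1 := by
      field_simp
      rw [← mul_pow, one_div_mul_cancel (by positivity), one_pow]
    calc (1:ℝ) = (1/(K.factorial:ℝ)) * (1/((K:ℝ)+1))^t * ((K.factorial:ℝ) * ((K:ℝ)+1)^t) :=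
          this.symm
      _ ≤ (1/(K.factorial:ℝ)) * (1/((K:ℝ)+1))^t * ((t + K).factorial : ℝ) := by
          apply mul_le_mul_of_nonneg_left hfg
          positivity
  refine hle.trans (le_of_eq ?_)
  have h2 : (1:ℝ) - 1/((K:ℝ)+1) = (K:ℝ)/((K:ℝ)+1) := by
    field_simp
    ring
  rw [h2, one_div, inv_div]
  field_simp

lemma aux_pS1_nonneg (K : ℕ) : 0 ≤ pS1 K := by
  unfold pS1
  have h1 : (0:ℝ) ≤ ∑' j : ℕ, if K ≤ j then (1 : ℝ) / (j.factorial : ℝ) else 0 := by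
    apply tsum_nonneg
    intro j
    split <;> positivity
  have h2 : (0:ℝ) ≤ ∑ j ∈ Finset.range (K - 1), 1 / (j.factorial : ℝ) := by
    apply Finset.sum_nonneg; intro j _; positivity
  have := Real.exp_pos (-1)
  have := Real.exp_pos 1
  positivity

lemma aux_pS1_lt_one (K : ℕ) (hK : 1 ≤ K) : pS1 K < 1 := by
  have he : (0:ℝ) < Real.exp 1 := Real.exp_pos 1
  have htsum : (∑' j : ℕ, if K ≤ j then (1 : ℝ) / (j.factorial : ℝ) else 0)
      = Real.exp 1 - ∑ j ∈ Finset.range K, (1:ℝ) / j.factorial := (aux_tail_hasSum K).tsum_eq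
  have htail_nonneg : 0 ≤ Real.exp 1 - ∑ j ∈ Finset.range K, (1:ℝ) / j.factorial := by
    rw [← htsum]
    apply tsum_nonneg; intro j; split <;> positivity
  set P : ℕ → ℝ := fun n => ∑ j ∈ Finset.range n, (1:ℝ) / j.factorial with hP
  have hKK : K = (K-1) + 1 := by omega
  have hPsplit : P K = P (K-1) + 1 / ((K-1).factorial : ℝ) :=
    calc P K = P ((K-1)+1) := by rw [← hKK]
      _ = P (K-1) + 1/((K-1).factorial:ℝ) := Finset.sum_range_succ _ _
  have hfpos : (0:ℝ) < ((K-1).factorial : ℝ) := by exact_mod_cast (K-1).factorial_pos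
  have key : (K:ℝ) * (Real.exp 1 - P K) < (Real.exp 1 - P K) + 1 / ((K-1).factorial : ℝ) := by
    rcases Nat.lt_or_ge K 2 with h1 | h2
    · have hk1 : K = 1 := by omega
      subst hk1
      norm_num
    · have hk2 : (2:ℝ) ≤ (K:ℝ) := by exact_mod_cast h2
      have hfac : (K.factorial : ℝ) = (K:ℝ) * ((K-1).factorial : ℝ) := by
        rw [hKK, Nat.factorial_succ]
        push_cast [← hKK]
        ring
      have ht := aux_tail_le K hK
      rw [hfac] at ht
      set t := Real.exp 1 - P K with hth
      have ht' : t * ((K:ℝ) * ((K:ℝ) * ((K-1).factorial : ℝ))) ≤ (K:ℝ) + 1 := by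
        rw [← le_div_iff₀ (by positivity)]
        exact ht
      have hgoal : ((K:ℝ) - 1) * t * ((K-1).factorial : ℝ) < 1 := by
        nlinarith [mul_le_mul_of_nonneg_left ht' (by linarith : (0:ℝ) ≤ (K:ℝ) - 1),
          sq_nonneg ((K:ℝ)), htail_nonneg, hfpos]
      have : ((K:ℝ) - 1) * t < 1 / ((K-1).factorial : ℝ) := by
        rw [lt_div_iff₀ hfpos]
        exact hgoal
      linarith
  have hlt : P (K-1) + (K:ℝ) * (Real.exp 1 - P K) < Real.exp 1 := by
    have : Real.exp 1 = P (K-1) + ((Real.exp 1 - P K) + 1 / ((K-1).factorial : ℝ)) := by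
      rw [hPsplit]; ring
    linarith
  unfold pS1
  rw [htsum, Real.exp_neg]
  rw [div_mul_eq_mul_div]
  have e1 : ∑ j ∈ Finset.range (K-1), (1:ℝ)/(j.factorial:ℝ) = P (K-1) := rfl
  have e2 : ∑ j ∈ Finset.range K, (1:ℝ)/(j.factorial:ℝ) = P K := rfl
  rw [e1, e2]
  calc (Real.exp 1)⁻¹ * P (K-1) + (K:ℝ) * (Real.exp 1 - P K) / Real.exp 1
      = (P (K-1) + (K:ℝ) * (Real.exp 1 - P K)) / Real.exp 1 := by
        field_simp
      _ < Real.exp 1 / Real.exp 1 := by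
        apply div_lt_div_of_pos_right hlt he
      _ = 1 := div_self (ne_of_gt he)

lemma aux_weight_sum_le {x : ℝ} (hx : 0 ≤ x) (L : ℕ) :
    ∑ m ∈ Finset.range L, x ^ m / (Real.exp x * (m.factorial : ℝ)) ≤ 1 := by
  have hx1 : (0:ℝ) < Real.exp x := Real.exp_pos x
  have h1 : ∑ m ∈ Finset.range L, x ^ m / (Real.exp x * (m.factorial : ℝ))
      = (∑ m ∈ Finset.range L, x ^ m / (m.factorial : ℝ)) / Real.exp x := by
    rw [Finset.sum_div]
    apply Finset.sum_congr rfl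
    intro m _
    rw [mul_comm, ← div_div]
  rw [h1, div_le_one hx1]
  exact Real.sum_le_exp_of_nonneg hx L

lemma aux_pRanked_nonneg (L i : ℕ) (hi : 1 ≤ i) : 0 ≤ pRanked L i := by
  unfold pRanked
  apply Finset.sum_nonneg
  intro m _
  have hx : (0:ℝ) ≤ (i:ℝ) - 1 := by
    have : (1:ℝ) ≤ (i:ℝ) := by exact_mod_cast hi
    linarith
  have := Real.exp_pos ((i:ℝ) - 1)
  have hm : (0:ℝ) < (m.factorial : ℝ) := by exact_mod_cast m.factorial_pos
  have := aux_pS1_nonneg (L - m)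
  positivity

lemma aux_pRanked_le (L i : ℕ) (hi : 1 ≤ i) {c : ℝ} (hc0 : 0 ≤ c)
    (hc : ∀ m ∈ Finset.range L, pS1 (L - m) ≤ c) : pRanked L i ≤ c := by
  unfold pRanked
  have hx : (0:ℝ) ≤ (i:ℝ) - 1 := by
    have : (1:ℝ) ≤ (i:ℝ) := by exact_mod_cast hi
    linarith
  calc ∑ m ∈ Finset.range L,
        ((i : ℝ) - 1) ^ m / (Real.exp ((i : ℝ) - 1) * (m.factorial : ℝ)) * pS1 (L - m)
      ≤ ∑ m ∈ Finset.range L,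
        ((i : ℝ) - 1) ^ m / (Real.exp ((i : ℝ) - 1) * (m.factorial : ℝ)) * c := by
        apply Finset.sum_le_sum
        intro m hm
        apply mul_le_mul_of_nonneg_left (hc m hm)
        have := Real.exp_pos ((i:ℝ) - 1)
        have hmf : (0:ℝ) < (m.factorial : ℝ) := by exact_mod_cast m.factorial_pos
        positivity
    _ = (∑ m ∈ Finset.range L,
        ((i : ℝ) - 1) ^ m / (Real.exp ((i : ℝ) - 1) * (m.factorial : ℝ))) * c := by
        rw [Finset.sum_mul]
    _ ≤ 1 * c := by
        apply mul_le_mul_of_nonneg_right (aux_weight_sum_le hx L) hc0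
    _ = c := one_mul c

/-- For every `L ≥ 1`: `p_i(L) < 1` for every `i ≥ 1`, `p_i(L) → 0` as
`i → ∞`, `Σ_{i=1}^{∞} p_i(L) < ∞`, and the infinite product `∏_{i=1}^{∞} (1 − p_i(L))`
converges to a strictly positive real number. -/
theorem stmt11 (L : ℕ) (hL : 1 ≤ L) :
    (∀ i : ℕ, 1 ≤ i → pRanked L i < 1) ∧
    Tendsto (fun i : ℕ => pRanked L i) atTop (nhds 0) ∧
    Summable (fun i : ℕ => pRanked L (i + 1)) ∧
    Multipliable (fun i : ℕ => 1 - pRanked L (i + 1)) ∧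
    0 < ∏' i : ℕ, (1 - pRanked L (i + 1)) := by
  classical
  -- uniform bound c
  have hne : (Finset.Icc 1 L).Nonempty := ⟨1, by simp [hL]⟩
  set c : ℝ := (Finset.Icc 1 L).sup' hne pS1 with hcdef
  have hc1 : c < 1 := by
    rw [hcdef, Finset.sup'_lt_iff]
    intro K hK
    rw [Finset.mem_Icc] at hK
    exact aux_pS1_lt_one K hK.1
  have hc0 : 0 ≤ c := by
    refine le_trans (aux_pS1_nonneg L) ?_
    exact Finset.le_sup' pS1 (by simp [hL] : L ∈ Finset.Icc 1 L)
  have hmem : ∀ m ∈ Finset.range L, pS1 (L - m) ≤ c := by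
    intro m hm
    rw [Finset.mem_range] at hm
    exact Finset.le_sup' pS1 (by rw [Finset.mem_Icc]; omega : L - m ∈ Finset.Icc 1 L)
  have hle : ∀ i : ℕ, 1 ≤ i → pRanked L i ≤ c := fun i hi =>
    aux_pRanked_le L i hi hc0 hmem
  have hlt1 : ∀ i : ℕ, 1 ≤ i → pRanked L i < 1 := fun i hi =>
    lt_of_le_of_lt (hle i hi) hc1
  -- tendsto
  have htend : Tendsto (fun i : ℕ => pRanked L i) atTop (nhds 0) := by
    have : Tendsto (fun i : ℕ => ∑ m ∈ Finset.range L,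
        ((i : ℝ) - 1) ^ m / (Real.exp ((i : ℝ) - 1) * (m.factorial : ℝ)) * pS1 (L - m))
        atTop (nhds (∑ m ∈ Finset.range L, (0:ℝ))) := by
      apply tendsto_finset_sum
      intro m _
      have hbase : Tendsto (fun x : ℝ => x ^ m * Real.exp (-x)) atTop (nhds 0) :=
        Real.tendsto_pow_mul_exp_neg_atTop_nhds_zero m
      have hxt : Tendsto (fun i : ℕ => (i:ℝ) - 1) atTop atTop := by
        simpa [sub_eq_add_neg] using
          tendsto_atTop_add_const_right atTop (-1 : ℝ) tendsto_natCast_atTop_atTop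
      have hcomp : Tendsto (fun i : ℕ => ((i:ℝ) - 1) ^ m * Real.exp (-((i:ℝ) - 1)))
          atTop (nhds 0) := hbase.comp hxt
      have := hcomp.mul_const (pS1 (L - m) / (m.factorial : ℝ))
      rw [zero_mul] at this
      refine this.congr (fun i => ?_)
      rw [Real.exp_neg]
      have hmf : ((m.factorial : ℝ)) ≠ 0 := by
        exact_mod_cast m.factorial_pos.ne'
      field_simp
    have h0 : (∑ m ∈ Finset.range L, (0:ℝ)) = 0 := by simp
    rw [h0] at this
    exact this
  -- summable
  have hsum : Summable (fun i : ℕ => pRanked L (i + 1)) := by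
    have : Summable (fun i : ℕ => ∑ m ∈ Finset.range L,
        (pS1 (L - m) / (m.factorial : ℝ)) * ((i:ℝ) ^ m * (Real.exp (-1)) ^ i)) := by
      apply summable_sum
      intro m _
      apply Summable.mul_left
      apply summable_pow_mul_geometric_of_norm_lt_one
      rw [Real.norm_eq_abs, abs_of_pos (Real.exp_pos _)]
      exact Real.exp_lt_one_iff.mpr (by norm_num)
    refine this.congr (fun i => ?_)
    unfold pRanked
    apply Finset.sum_congr rfl
    intro m _
    have h1 : ((i + 1 : ℕ) : ℝ) - 1 = (i : ℝ) := by push_cast; ring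
    rw [h1]
    have h2 : (Real.exp (-1)) ^ i = (Real.exp (i:ℝ))⁻¹ := by
      rw [← Real.exp_nat_mul]
      rw [← Real.exp_neg]
      congr 1
      ring
    rw [h2]
    have hmf : ((m.factorial : ℝ)) ≠ 0 := by exact_mod_cast m.factorial_pos.ne'
    have hex : Real.exp (i:ℝ) ≠ 0 := (Real.exp_pos _).ne'
    field_simp
  -- positivity of factors
  have hfac_pos : ∀ i : ℕ, 0 < 1 - pRanked L (i + 1) := fun i => by
    have := hlt1 (i + 1) (by omega)
    linarith
  have hfac_le : ∀ i : ℕ, 1 - c ≤ 1 - pRanked L (i + 1) := fun i => by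
    have := hle (i + 1) (by omega)
    linarith
  have h1c : (0:ℝ) < 1 - c := by linarith
  -- summable log
  have hlog : Summable (fun i : ℕ => Real.log (1 - pRanked L (i + 1))) := by
    apply Summable.of_norm
    have hbound : ∀ i : ℕ, ‖Real.log (1 - pRanked L (i + 1))‖
        ≤ pRanked L (i + 1) * (1 - c)⁻¹ := by
      intro i
      set a := pRanked L (i + 1) with ha
      have ha0 : 0 ≤ a := aux_pRanked_nonneg L (i + 1) (by omega)
      have hap : 0 < 1 - a := hfac_pos i
      have hlog_le : Real.log (1 - a) ≤ 0 := by
        apply Real.log_nonpos (by linarith) (by linarith)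
      rw [Real.norm_eq_abs, abs_of_nonpos hlog_le]
      have h3 : Real.log ((1 - a)⁻¹) ≤ (1 - a)⁻¹ - 1 :=
        Real.log_le_sub_one_of_pos (by positivity)
      rw [Real.log_inv] at h3
      have h4 : (1 - a)⁻¹ - 1 = a / (1 - a) := by
        field_simp
        ring
      have h5 : a / (1 - a) ≤ a * (1 - c)⁻¹ := by
        rw [div_eq_mul_inv]
        apply mul_le_mul_of_nonneg_left _ ha0
        apply inv_anti₀ h1c
        have := hfac_le i
        rw [← ha] at this
        linarith
      linarith
    apply Summable.of_nonneg_of_le (fun i => norm_nonneg _) hbound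
    exact hsum.mul_right _
  -- multipliable and positive product
  set f : ℕ → Unit → ℝ := fun n _ => 1 - pRanked L (n + 1) with hfdef
  have hfn : ∀ (x : Unit) (n : ℕ), 0 < f n x := fun _ n => hfac_pos n
  have hf : ∀ x : Unit, Summable fun n => Real.log (f n x) := fun _ => hlog
  have hmult : Multipliable (fun i : ℕ => 1 - pRanked L (i + 1)) :=
    Real.multipliable_of_summable_log (fun n => hfn () n) (hf ())
  have heq := Real.rexp_tsum_eq_tprod (f := fun n => f n ()) (fun n => hfn () n) (hf ())
  have hpos : 0 < ∏' i : ℕ, (1 - pRanked L (i + 1)) := by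
    have : (∏' i : ℕ, (1 - pRanked L (i + 1)))
        = Real.exp (∑' n : ℕ, Real.log (f n ())) := by
      rw [← heq]
    rw [this]
    exact Real.exp_pos _
  exact ⟨hlt1, htend, hsum, hmult, hpos⟩
end
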